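/- Let G be a finite simple graph on n vertices with arboricity at most α (the edge set of G partitions into at most α forests), where α ≥ 1 is an integer, and let ε > 0 be a real number. Define a sequence of induced subgraphs by G_0 = G and G_{i+1} = the induced subgraph of G_i on the set of vertices whose degree in G_i is at least (2+ε)·α. Then for every i, |V(G_{i+1})| ≤ (2/(2+ε))·|V(G_i)|; consequently, G_t has no vertices for every t with (2/(2+ε))^t · n < 1, so the peeling process empties the graph within ⌈log n / log((2+ε)/2)⌉ rounds. -/

import Mathlib

open Classical Finset

/-- A graph `G` has arboricity at most `a` if its edge set can be partitioned into
at most `a` forests, i.e. there are `a` acyclic subgraphs of `G` with pairwise disjoint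
edge sets whose union covers every edge of `G`. -/
def HasArboricityLE {V : Type*} (G : SimpleGraph V) (a : ℕ) : Prop :=
  ∃ F : Fin a → SimpleGraph V,
    (∀ i, (F i).IsAcyclic) ∧ (∀ i, F i ≤ G) ∧
    (Pairwise fun i j => Disjoint (F i).edgeSet (F j).edgeSet) ∧
    ∀ e ∈ G.edgeSet, ∃ i, e ∈ (F i).edgeSet

/-- An acyclic graph on `n` vertices has at most `n` edges. -/
lemma acyclic_card_edgeFinset_le {V : Type*} [Fintype V] [DecidableEq V]
    (H : SimpleGraph V) [Fintype H.edgeSet] (hH : H.IsAcyclic) :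
    H.edgeFinset.card ≤ Fintype.card V := by
  cases isEmpty_or_nonempty V with
  | inl h =>
      have : H.edgeFinset = ∅ := by
        ext e
        refine e.ind (fun x y => ?_)
        simp only [SimpleGraph.mem_edgeFinset, Finset.notMem_empty, iff_false]
        exact fun _ => h.elim x
      simp [this]
  | inr h =>
      obtain ⟨T, ⟨hHT, hTa⟩, hmax⟩ :=
        Set.Finite.exists_maximalFor id {H' : SimpleGraph V | H ≤ H' ∧ H'.IsAcyclic}
          (Set.toFinite _) ⟨H, le_refl H, hH⟩
      have hconn : T.Connected := by
        rw [SimpleGraph.connected_iff]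
        refine ⟨fun u v => ?_, h⟩
        by_contra hre
        have hne : u ≠ v := by rintro rfl; exact hre (SimpleGraph.Reachable.refl _)
        set T' := T ⊔ SimpleGraph.fromEdgeSet {s(u, v)} with hT'
        have hTT' : T ≤ T' := le_sup_left
        have hadj : T'.Adj u v := by
          simp [hT', SimpleGraph.sup_adj, SimpleGraph.fromEdgeSet_adj, hne]
        have hT'a : T'.IsAcyclic := by
          intro x c hc
          by_cases hmem : s(u, v) ∈ c.edges
          · have hnb : ¬ T'.IsBridge s(u, v) := by
              rw [SimpleGraph.isBridge_iff_forall_cycle_notMem hadj]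
              push_neg
              exact ⟨x, c, hc, hmem⟩
            rw [SimpleGraph.isBridge_iff] at hnb
            push_neg at hnb
            have hreach := hnb
            have hle : T' \ SimpleGraph.fromEdgeSet {s(u, v)} ≤ T := by
              intro a b hab
              rw [SimpleGraph.sdiff_adj] at hab
              rcases hab with ⟨hab1, hab2⟩
              cases hab1 with
              | inl h1 => exact h1
              | inr h2 => exact absurd h2 hab2
            exact hre (hreach.mono hle)
          · have hsub : ∀ f ∈ c.edges, f ∈ T.edgeSet := by
              intro f hf
              have hf' : f ∈ T'.edgeSet := c.edges_subset_edgeSet hf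
              rw [hT', SimpleGraph.edgeSet_sup, Set.mem_union] at hf'
              cases hf' with
              | inl h1 => exact h1
              | inr h2 =>
                  rw [SimpleGraph.edgeSet_fromEdgeSet] at h2
                  exact absurd (h2.1 : f ∈ ({s(u,v)} : Set (Sym2 V))) (by
                    simp only [Set.mem_singleton_iff]
                    rintro rfl
                    exact hmem hf)
            exact hTa (c.transfer T hsub) (hc.transfer hsub)
        have heq : T = T' := le_antisymm hTT' (hmax ⟨le_trans hHT hTT', hT'a⟩ hTT')
        exact hre (heq ▸ hadj : T.Adj u v).reachable
      have htree : T.IsTree := ⟨hconn, hTa⟩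
      letI : Fintype T.edgeSet := Fintype.ofFinite _
      have hcard := htree.card_edgeFinset
      have hsub : H.edgeFinset ⊆ T.edgeFinset := by
        intro e he
        rw [SimpleGraph.mem_edgeFinset] at he ⊢
        exact SimpleGraph.edgeSet_mono hHT he
      calc H.edgeFinset.card ≤ T.edgeFinset.card := Finset.card_le_card hsub
        _ ≤ Fintype.card V := by omega

lemma arboricity_sum_deg_le {V : Type*} [Fintype V] [DecidableEq V]
    (G : SimpleGraph V) [DecidableRel G.Adj] (a : ℕ) (hG : HasArboricityLE G a)
    (U : Finset V) :
    ∑ v ∈ U, (U.filter fun w => G.Adj v w).card ≤ 2 * a * U.card := by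
  classical
  obtain ⟨F, hac, hle, hdisj, hcov⟩ := hG
  have key : ∀ i : Fin a,
      ∑ v ∈ U, (U.filter fun w => (F i).Adj v w).card ≤ 2 * U.card := by
    intro i
    letI hdec : DecidableRel (F i).Adj := Classical.decRel _
    let H : SimpleGraph {x // x ∈ U} := (F i).comap Subtype.val
    letI : DecidableRel H.Adj := fun x y => hdec x.1 y.1
    have hHa : H.IsAcyclic := by
      intro x c hc
      have emb : H ↪g (F i) :=
        SimpleGraph.Embedding.comap (Function.Embedding.subtype _) (F i)
      exact hac i (c.map emb.toHom) (hc.map emb.injective)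
    have hdeg : ∀ x : {x // x ∈ U},
        H.degree x = (U.filter fun w => (F i).Adj ↑x w).card := by
      intro x
      rw [SimpleGraph.degree, SimpleGraph.neighborFinset_eq_filter, Finset.univ_eq_attach]
      calc (U.attach.filter fun w => H.Adj x w).card
          = (U.attach.filter fun w : {y // y ∈ U} => (F i).Adj ↑x ↑w).card := by
            apply congrArg
            apply Finset.filter_congr
            intro w _
            rfl
        _ = ((U.filter fun w => (F i).Adj ↑x w).attach.map
              ((Function.Embedding.refl _).subtypeMap Finset.mem_of_mem_filter)).card := by
            rw [Finset.filter_attach]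
        _ = (U.filter fun w => (F i).Adj ↑x w).card := by
            rw [Finset.card_map, Finset.card_attach]
    calc ∑ v ∈ U, (U.filter fun w => (F i).Adj v w).card
        = ∑ x ∈ U.attach, (U.filter fun w => (F i).Adj ↑x w).card :=
          (Finset.sum_attach U _).symm
      _ = ∑ x : {x // x ∈ U}, H.degree x := by
          rw [Finset.univ_eq_attach]
          exact Finset.sum_congr rfl fun x _ => (hdeg x).symm
      _ = 2 * H.edgeFinset.card := H.sum_degrees_eq_twice_card_edges
      _ ≤ 2 * Fintype.card {x // x ∈ U} :=
          Nat.mul_le_mul_left 2 (acyclic_card_edgeFinset_le H hHa)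
      _ = 2 * U.card := by rw [Fintype.card_coe]
  have hptwise : ∀ v ∈ U, (U.filter fun w => G.Adj v w).card
      ≤ ∑ i : Fin a, (U.filter fun w => (F i).Adj v w).card := by
    intro v _
    have hsub : (U.filter fun w => G.Adj v w)
        ⊆ Finset.univ.biUnion fun i : Fin a => U.filter fun w => (F i).Adj v w := by
      intro w hw
      rw [Finset.mem_filter] at hw
      obtain ⟨i, hi⟩ := hcov s(v, w) (hw.2 : G.Adj v w)
      refine Finset.mem_biUnion.2 ⟨i, Finset.mem_univ _, ?_⟩
      exact Finset.mem_filter.2 ⟨hw.1, hi⟩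
    exact le_trans (Finset.card_le_card hsub) (Finset.card_biUnion_le)
  calc ∑ v ∈ U, (U.filter fun w => G.Adj v w).card
      ≤ ∑ v ∈ U, ∑ i : Fin a, (U.filter fun w => (F i).Adj v w).card :=
        Finset.sum_le_sum hptwise
    _ = ∑ i : Fin a, ∑ v ∈ U, (U.filter fun w => (F i).Adj v w).card := Finset.sum_comm
    _ ≤ ∑ _i : Fin a, 2 * U.card := Finset.sum_le_sum fun i _ => key i
    _ = a * (2 * U.card) := by simp [Finset.sum_const, mul_comm]
    _ = 2 * a * U.card := by ring
/-- Peeling process of the Barenboim-Elkin orientation algorithm: start with all vertices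
(`S 0 = V`), and at each round keep only the vertices whose degree inside the current
induced subgraph is at least `(2+ε)·a`.  If `G` has arboricity at most `a ≥ 1`, then each
round keeps at most a `2/(2+ε)` fraction of the vertices; consequently `S t` is empty
whenever `(2/(2+ε))^t · n < 1`, so the process empties the graph within
`log n / log((2+ε)/2)` rounds. -/
theorem arboricity_peeling_process {V : Type*} [Fintype V] [DecidableEq V]
    (G : SimpleGraph V) [DecidableRel G.Adj] (a : ℕ) (ha : 1 ≤ a)
    (hG : HasArboricityLE G a) (ε : ℝ) (hε : 0 < ε)
    (S : ℕ → Finset V) (hS0 : S 0 = Finset.univ)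
    (hSstep : ∀ i, S (i + 1)
      = (S i).filter fun v => (2 + ε) * (a : ℝ) ≤ (((S i).filter fun w => G.Adj v w).card : ℝ)) :
    (∀ i, ((S (i + 1)).card : ℝ) ≤ (2 / (2 + ε)) * ((S i).card : ℝ))
    ∧ (∀ t : ℕ, (2 / (2 + ε)) ^ t * (Fintype.card V : ℝ) < 1 → S t = ∅)
    ∧ (∀ t : ℕ,
        Real.log (Fintype.card V : ℝ) / Real.log ((2 + ε) / 2) < (t : ℝ) → S t = ∅) := by
  have h2ε : (0 : ℝ) < 2 + ε := by linarith
  have haR : (0 : ℝ) < (a : ℝ) := by exact_mod_cast Nat.lt_of_lt_of_le Nat.zero_lt_one ha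
  have part1 : ∀ i, ((S (i + 1)).card : ℝ) ≤ (2 / (2 + ε)) * ((S i).card : ℝ) := by
    intro i
    set U := S i with hU
    set T := S (i + 1) with hT
    have hTdef : T = U.filter fun v =>
        (2 + ε) * (a : ℝ) ≤ ((U.filter fun w => G.Adj v w).card : ℝ) := hSstep i
    have hTsub : T ⊆ U := hTdef ▸ Finset.filter_subset _ _
    -- key chain of inequalities over ℝ
    have hkey : (2 + ε) * (a : ℝ) * T.card ≤ 2 * (a : ℝ) * U.card := by
      have h1 : (2 + ε) * (a : ℝ) * T.card
          ≤ ∑ v ∈ T, ((U.filter fun w => G.Adj v w).card : ℝ) := by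
        rw [mul_comm ((2 + ε) * (a : ℝ)) (T.card : ℝ), ← nsmul_eq_mul, ← Finset.sum_const]
        refine Finset.sum_le_sum fun v hv => ?_
        rw [hTdef] at hv
        exact (Finset.mem_filter.1 hv).2
      have h2 : ∑ v ∈ T, ((U.filter fun w => G.Adj v w).card : ℝ)
          ≤ ∑ v ∈ U, ((U.filter fun w => G.Adj v w).card : ℝ) :=
        Finset.sum_le_sum_of_subset_of_nonneg hTsub fun _ _ _ => Nat.cast_nonneg _
      have h3 : ∑ v ∈ U, ((U.filter fun w => G.Adj v w).card : ℝ)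
          ≤ 2 * (a : ℝ) * U.card := by
        have := arboricity_sum_deg_le G a hG U
        push_cast [← Nat.cast_sum] at *
        exact_mod_cast this
      linarith
    rw [div_mul_eq_mul_div, le_div_iff₀ h2ε]
    nlinarith [hkey, Nat.cast_nonneg (α := ℝ) T.card, Nat.cast_nonneg (α := ℝ) U.card]
  have hfrac_nonneg : (0 : ℝ) ≤ 2 / (2 + ε) := by positivity
  have hcard : ∀ t, ((S t).card : ℝ) ≤ (2 / (2 + ε)) ^ t * (Fintype.card V : ℝ) := by
    intro t
    induction t with
    | zero => simp [hS0]
    | succ n ih =>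
        calc ((S (n + 1)).card : ℝ) ≤ (2 / (2 + ε)) * ((S n).card : ℝ) := part1 n
          _ ≤ (2 / (2 + ε)) * ((2 / (2 + ε)) ^ n * (Fintype.card V : ℝ)) :=
              mul_le_mul_of_nonneg_left ih hfrac_nonneg
          _ = (2 / (2 + ε)) ^ (n + 1) * (Fintype.card V : ℝ) := by ring
  have part2 : ∀ t : ℕ, (2 / (2 + ε)) ^ t * (Fintype.card V : ℝ) < 1 → S t = ∅ := by
    intro t ht
    have : ((S t).card : ℝ) < 1 := lt_of_le_of_lt (hcard t) ht
    have : (S t).card = 0 := by exact_mod_cast Nat.lt_one_iff.1 (by exact_mod_cast this)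
    exact Finset.card_eq_zero.1 this
  refine ⟨part1, part2, ?_⟩
  intro t ht
  apply part2
  set r : ℝ := (2 + ε) / 2 with hr
  have hr1 : 1 < r := by rw [hr, lt_div_iff₀ (by norm_num : (0:ℝ) < 2)]; linarith
  have hr0 : (0 : ℝ) < r := lt_trans one_pos hr1
  have hinv : 2 / (2 + ε) = r⁻¹ := by rw [hr, inv_div]
  rcases Nat.eq_zero_or_pos (Fintype.card V) with h0 | hpos
  · rw [h0]
    simp only [Nat.cast_zero, mul_zero]
    norm_num
  · have hn1 : (1 : ℝ) ≤ (Fintype.card V : ℝ) := by exact_mod_cast hpos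
    have hlogr : 0 < Real.log r := Real.log_pos hr1
    rw [div_lt_iff₀ hlogr] at ht
    have hlog : Real.log (Fintype.card V : ℝ) < Real.log (r ^ t) := by
      rw [Real.log_pow]; exact ht
    have hlt : (Fintype.card V : ℝ) < r ^ t :=
      (Real.log_lt_log_iff (by linarith) (pow_pos hr0 t)).1 hlog
    rw [hinv, inv_pow, ← div_eq_inv_mul]
    exact div_lt_one (pow_pos hr0 t) |>.2 hlt
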